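/- arXiv:2104.07942 — 3 statements merged into one kernel-verified Lean document; each statement's English description precedes it below -/
import Mathlib

section
/- For $0<b$ and any $y\in(-b,b)$, the Cauchy principal value $P\int_{-b}^{b}\frac{dx}{(x-y)\sqrt{b^2-x^2}}=0$. -/
open Filter

section aux
open Real Set MeasureTheory
-- derivative lemma
lemma aux_deriv (b y s x : ℝ) (hs : s^2 = b^2 - y^2) (hs0 : 0 < s)
    (hx : x ∈ Set.Ioo (-b) b) (hxy : x ≠ y) :
    HasDerivAt (fun x => (1/s) * (Real.log (x - y) - Real.log (b^2 - x*y + s * Real.sqrt (b^2 - x^2))))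
      (1 / ((x - y) * Real.sqrt (b ^ 2 - x ^ 2))) x := by
  obtain ⟨hx1, hx2⟩ := hx
  have hx2' : x^2 < b^2 := by nlinarith
  have hy2 : y^2 < b^2 := by nlinarith
  have hrpos : 0 < b^2 - x^2 := by linarith
  set r := Real.sqrt (b^2 - x^2) with hrdef
  have hr0 : 0 < r := Real.sqrt_pos.2 hrpos
  have hr2 : r^2 = b^2 - x^2 := Real.sq_sqrt hrpos.le
  have hDpos : 0 < b^2 - x*y + s*r := by nlinarith [mul_pos hs0 hr0, sq_nonneg (x+y), sq_nonneg (x-y)]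
  have hxy' : x - y ≠ 0 := sub_ne_zero.2 hxy
  have h1 : HasDerivAt (fun x : ℝ => x - y) 1 x := (hasDerivAt_id x).sub_const y
  have hlog1 : HasDerivAt (fun x : ℝ => Real.log (x - y)) (1/(x-y)) x := by
    simpa [Function.comp_def] using (Real.hasDerivAt_log hxy').comp x h1
  have hin : HasDerivAt (fun x : ℝ => b^2 - x^2) (-(2*x)) x := by
    simpa using ((hasDerivAt_pow 2 x).const_sub (b^2))
  have hsq : HasDerivAt (fun x : ℝ => Real.sqrt (b^2 - x^2)) (1/(2*r) * (-(2*x))) x :=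
    (Real.hasDerivAt_sqrt hrpos.ne').comp x hin
  have hD : HasDerivAt (fun x : ℝ => b^2 - x*y + s * Real.sqrt (b^2 - x^2))
      (-y + s * (1/(2*r) * (-(2*x)))) x := by
    have : HasDerivAt (fun x : ℝ => x*y) y x := by simpa using (hasDerivAt_id x).mul_const y
    exact ((this.const_sub (b^2)).add (hsq.const_mul s))
  have hlog2 : HasDerivAt (fun x : ℝ => Real.log (b^2 - x*y + s * Real.sqrt (b^2 - x^2)))
      ((b^2 - x*y + s*r)⁻¹ * (-y + s * (1/(2*r) * (-(2*x))))) x :=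
    by have h := (Real.hasDerivAt_log hDpos.ne').comp x hD; exact h
  have := (hlog1.sub hlog2).const_mul (1/s)
  convert this using 1
  · rfl
  · rfl
  · rfl
  have hD' : b ^ 2 - x * y + r * s ≠ 0 := by rw [mul_comm r s]; exact hDpos.ne'
  field_simp
  linear_combination r * hs - s * hr2


lemma aux_int_left (b y v : ℝ) (hb : 0 < b) (hv1 : -b < v) (hv2 : v < y) (hy : y < b) :
    IntervalIntegrable (fun x => 1 / ((x - y) * Real.sqrt (b ^ 2 - x ^ 2)))
      MeasureTheory.volume (-b) v := by
  have hle : -b ≤ v := hv1.le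
  have hC : 0 < (y - v) * Real.sqrt (b - v) := by
    apply mul_pos (by linarith) (Real.sqrt_pos.2 (by linarith))
  rw [intervalIntegrable_iff_integrableOn_Ioc_of_le hle]
  have hg0 : IntervalIntegrable (fun x : ℝ => x ^ (-(1/2) : ℝ)) volume 0 (v + b) :=
    intervalIntegral.intervalIntegrable_rpow' (by norm_num)
  have hg1 : IntervalIntegrable (fun x : ℝ => (x + b) ^ (-(1/2) : ℝ)) volume (-b) v := by
    simpa using hg0.comp_add_right b
  have hg : IntegrableOn (fun x : ℝ => (x + b) ^ (-(1/2) : ℝ) * ((y - v) * Real.sqrt (b - v))⁻¹)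
      (Set.Ioc (-b) v) := by
    exact ((intervalIntegrable_iff_integrableOn_Ioc_of_le hle).1 hg1).mul_const _
  refine hg.mono' ?_ ?_
  · apply ContinuousOn.aestronglyMeasurable ?_ measurableSet_Ioc
    apply ContinuousOn.div continuousOn_const
    · exact ContinuousOn.mul (by fun_prop) (Real.continuous_sqrt.comp_continuousOn (by fun_prop))
    · intro x hx
      obtain ⟨h1, h2⟩ := hx
      have : 0 < b ^ 2 - x ^ 2 := by nlinarith
      exact mul_ne_zero (by intro h; nlinarith [sub_eq_zero.1 h]) (Real.sqrt_pos.2 this).ne'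
  · filter_upwards [MeasureTheory.ae_restrict_mem measurableSet_Ioc] with x hx
    obtain ⟨h1, h2⟩ := hx
    have hxb : 0 < x + b := by linarith
    have hsq : Real.sqrt (b ^ 2 - x ^ 2) = Real.sqrt (b - x) * Real.sqrt (x + b) := by
      rw [← Real.sqrt_mul (by linarith)]; ring_nf
    have hkey : (y - v) * Real.sqrt (b - v) * Real.sqrt (x + b) ≤ (y - x) * Real.sqrt (b ^ 2 - x ^ 2) := by
      rw [hsq]
      have h3 : Real.sqrt (b - v) ≤ Real.sqrt (b - x) := Real.sqrt_le_sqrt (by linarith)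
      have h4 : (0:ℝ) ≤ Real.sqrt (x + b) := Real.sqrt_nonneg _
      have h5 : (y - v) * Real.sqrt (b - v) ≤ (y - x) * Real.sqrt (b - x) :=
        mul_le_mul (by linarith) h3 (Real.sqrt_nonneg _) (by linarith)
      rw [← mul_assoc]
      exact mul_le_mul_of_nonneg_right h5 h4
    have hpos : 0 < (y - v) * Real.sqrt (b - v) * Real.sqrt (x + b) :=
      mul_pos hC (Real.sqrt_pos.2 hxb)
    have hrw : (x + b) ^ (-(1/2) : ℝ) = (Real.sqrt (x + b))⁻¹ := by
      rw [Real.rpow_neg hxb.le, ← Real.sqrt_eq_rpow]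
    have habs : |1 / ((x - y) * Real.sqrt (b ^ 2 - x ^ 2))| =
        1 / ((y - x) * Real.sqrt (b ^ 2 - x ^ 2)) := by
      rw [abs_div, abs_one, abs_mul, abs_of_neg (by linarith : x - y < 0),
        abs_of_nonneg (Real.sqrt_nonneg _)]
      ring_nf
    rw [Real.norm_eq_abs, habs, hrw]
    calc 1 / ((y - x) * Real.sqrt (b ^ 2 - x ^ 2))
        ≤ 1 / ((y - v) * Real.sqrt (b - v) * Real.sqrt (x + b)) :=
          one_div_le_one_div_of_le hpos hkey
      _ = (Real.sqrt (x + b))⁻¹ * ((y - v) * Real.sqrt (b - v))⁻¹ := by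
          rw [one_div, mul_inv, mul_comm]


lemma aux_int_right (b y u : ℝ) (hb : 0 < b) (hy : -b < y) (hu1 : y < u) (hu2 : u < b) :
    IntervalIntegrable (fun x => 1 / ((x - y) * Real.sqrt (b ^ 2 - x ^ 2)))
      MeasureTheory.volume u b := by
  have h := aux_int_left b (-y) (-u) hb (by linarith) (by linarith) (by linarith)
  have h2 := ((IntervalIntegrable.iff_comp_neg (by exact enorm_ne_top)).mp h).neg
  have heq : (fun x : ℝ => 1 / ((x - y) * Real.sqrt (b ^ 2 - x ^ 2))) =
      fun x : ℝ => -(1 / ((-x - -y) * Real.sqrt (b ^ 2 - (-x) ^ 2))) := by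
    funext x
    rw [neg_sq]
    have : (-x - -y) = -(x - y) := by ring
    rw [this, neg_mul, div_neg, neg_neg]
  rw [heq]
  simpa [Pi.neg_def] using h2.symm

open Filter


end aux

section main
open Real Set MeasureTheory
/-- The Cauchy principal value `P∫_{-b}^{b} dx/((x-y)√(b²-x²)) = 0` for `y ∈ (-b,b)`. -/
theorem stmt_9 (b y : ℝ) (hb : 0 < b) (hy : y ∈ Set.Ioo (-b) b) :
    Filter.Tendsto
      (fun ε : ℝ =>
        (∫ x in (-b)..(y - ε), 1 / ((x - y) * Real.sqrt (b ^ 2 - x ^ 2))) +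
          ∫ x in (y + ε)..b, 1 / ((x - y) * Real.sqrt (b ^ 2 - x ^ 2)))
      (nhdsWithin 0 (Set.Ioi 0)) (nhds 0) := by
  obtain ⟨hy1, hy2⟩ := hy
  have hy2' : y ^ 2 < b ^ 2 := by nlinarith
  set s := Real.sqrt (b ^ 2 - y ^ 2) with hsdef
  have hs0 : 0 < s := Real.sqrt_pos.2 (by nlinarith)
  have hs : s ^ 2 = b ^ 2 - y ^ 2 := Real.sq_sqrt (by nlinarith)
  set D : ℝ → ℝ := fun x => b ^ 2 - x * y + s * Real.sqrt (b ^ 2 - x ^ 2) with hDdef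
  set F : ℝ → ℝ := fun x => (1 / s) * (Real.log (x - y) - Real.log (D x)) with hFdef
  have hDcont : Continuous D := by
    apply Continuous.add (by fun_prop)
    exact Continuous.mul continuous_const (Real.continuous_sqrt.comp (by fun_prop))
  have hDpos : ∀ x ∈ Set.Icc (-b) b, 0 < D x := by
    intro x hx
    obtain ⟨h1, h2⟩ := hx
    have hx2 : x ^ 2 ≤ b ^ 2 := by nlinarith
    have : 0 < b ^ 2 - x * y := by nlinarith [sq_nonneg (x + y), sq_nonneg (x - y)]
    have := mul_nonneg hs0.le (Real.sqrt_nonneg (b ^ 2 - x ^ 2))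
    simp only [hDdef]; linarith
  set δ := min (b - y) (y + b) with hδdef
  have hδ : 0 < δ := lt_min (by linarith) (by linarith)
  have key : ∀ ε ∈ Set.Ioo (0 : ℝ) δ,
      ((∫ x in (-b)..(y - ε), 1 / ((x - y) * Real.sqrt (b ^ 2 - x ^ 2))) +
          ∫ x in (y + ε)..b, 1 / ((x - y) * Real.sqrt (b ^ 2 - x ^ 2))) =
        (1 / s) * (Real.log (D (y + ε)) - Real.log (D (y - ε))) := by
    intro ε hε
    obtain ⟨hε0, hεδ⟩ := hε
    have hε1 : ε < b - y := lt_of_lt_of_le hεδ (min_le_left _ _)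
    have hε2 : ε < y + b := lt_of_lt_of_le hεδ (min_le_right _ _)
    have hcontF : ∀ u v : ℝ, -b ≤ u → v ≤ b → (∀ x ∈ Set.Icc u v, x ≠ y) →
        ContinuousOn F (Set.Icc u v) := by
      intro u v hu hv hne
      apply ContinuousOn.mul continuousOn_const
      apply ContinuousOn.sub
      · exact Real.continuousOn_log.comp (by fun_prop)
          (fun x hx => sub_ne_zero.2 (hne x hx))
      · exact Real.continuousOn_log.comp (hDcont.continuousOn)
          (fun x hx => (hDpos x ⟨le_trans hu hx.1, le_trans hx.2 hv⟩).ne')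
    have I1 : (∫ x in (-b)..(y - ε), 1 / ((x - y) * Real.sqrt (b ^ 2 - x ^ 2))) =
        F (y - ε) - F (-b) := by
      apply intervalIntegral.integral_eq_sub_of_hasDeriv_right_of_le (by linarith)
      · exact hcontF (-b) (y - ε) le_rfl (by linarith)
          (fun x hx => by intro h; subst h; linarith [hx.2])
      · intro x hx
        exact (aux_deriv b y s x hs hs0 ⟨hx.1, by linarith [hx.2]⟩
          (by intro h; subst h; linarith [hx.2])).hasDerivWithinAt
      · exact aux_int_left b y (y - ε) hb (by linarith) (by linarith) hy2
    have I2 : (∫ x in (y + ε)..b, 1 / ((x - y) * Real.sqrt (b ^ 2 - x ^ 2))) =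
        F b - F (y + ε) := by
      apply intervalIntegral.integral_eq_sub_of_hasDeriv_right_of_le (by linarith)
      · exact hcontF (y + ε) b (by linarith) le_rfl
          (fun x hx => by intro h; subst h; linarith [hx.1])
      · intro x hx
        exact (aux_deriv b y s x hs hs0 ⟨by linarith [hx.1], hx.2⟩
          (by intro h; subst h; linarith [hx.1])).hasDerivWithinAt
      · exact aux_int_right b y (y + ε) hb hy1 (by linarith) (by linarith)
    rw [I1, I2]
    have e1 : Real.log (y - ε - y) = Real.log ε := by
      rw [show y - ε - y = -ε by ring, Real.log_neg_eq_log]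
    have e2 : Real.log (y + ε - y) = Real.log ε := by rw [show y + ε - y = ε by ring]
    have e3 : D b = b * (b - y) := by
      simp only [hDdef, sub_self, Real.sqrt_zero, mul_zero, add_zero]; ring
    have e4 : D (-b) = b * (b + y) := by
      simp only [hDdef, neg_sq, sub_self, Real.sqrt_zero, mul_zero, add_zero]; ring
    have e5 : Real.log (b - y - y) = Real.log (b - y - y) := rfl
    have e6 : Real.log (-b - y) = Real.log (b + y) := by
      rw [show -b - y = -(b + y) by ring, Real.log_neg_eq_log]
    simp only [hFdef]
    rw [e1, e2, e3, e4, e6, Real.log_mul hb.ne' (by linarith : b - y ≠ 0),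
      Real.log_mul hb.ne' (by linarith : b + y ≠ 0)]
    ring
  have hlim : Tendsto (fun ε : ℝ => (1 / s) * (Real.log (D (y + ε)) - Real.log (D (y - ε))))
      (nhdsWithin 0 (Set.Ioi 0)) (nhds 0) := by
    have hDy : D y ≠ 0 := (hDpos y ⟨by linarith, by linarith⟩).ne'
    have hc : ContinuousAt (fun ε : ℝ => (1 / s) * (Real.log (D (y + ε)) - Real.log (D (y - ε)))) 0 := by
      apply ContinuousAt.mul continuousAt_const
      apply ContinuousAt.sub
      · exact (Real.continuousAt_log (by simpa using hDy)).comp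
          ((hDcont.continuousAt).comp (by fun_prop))
      · exact (Real.continuousAt_log (by simpa using hDy)).comp
          ((hDcont.continuousAt).comp (by fun_prop))
    have := hc.tendsto.mono_left (nhdsWithin_le_nhds (s := Set.Ioi (0:ℝ)))
    simpa using this
  refine hlim.congr' ?_
  filter_upwards [Ioo_mem_nhdsGT_of_mem (Set.mem_Ico.2 ⟨le_refl 0, hδ⟩)] with ε hε
  exact (key ε hε).symm

end main
end

section
/- For any $b>0$ and any $y\in[-b,b]$, $\int_{-b}^{b}\frac{\ln|x-y|}{\sqrt{b^2-x^2}}\,dx = \pi\ln\frac{b}{2}$; in particular this integral is independent of $y$. -/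
open Real MeasureTheory intervalIntegral Set

noncomputable def lsin (x : ℝ) : ℝ := Real.log |Real.sin x|

lemma logII01 : IntervalIntegrable Real.log volume 0 1 := by
  have h : IntervalIntegrable (fun x : ℝ => -Real.log x) volume 0 1 := by
    apply intervalIntegrable_deriv_of_nonneg
      (g := fun x : ℝ => x - x * Real.log x)
    · exact (continuous_id.sub Real.continuous_mul_log).continuousOn
    · intro x hx
      simp only [min_def, max_def] at hx
      norm_num at hx
      have hx0 : x ≠ 0 := ne_of_gt hx.1
      have h1 : HasDerivAt (fun x : ℝ => x - x * Real.log x)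
          (1 - (Real.log x + 1)) x :=
        (hasDerivAt_id x).sub (Real.hasDerivAt_mul_log hx0)
      convert h1 using 1
      ring
    · intro x hx
      simp only [min_def, max_def] at hx
      norm_num at hx
      simp only [neg_nonneg]
      exact Real.log_nonpos hx.1.le hx.2.le
  have h2 := h.neg
  have he : ((-fun x : ℝ => -Real.log x) : ℝ → ℝ) = Real.log := by
    funext x; simp
  rwa [he] at h2

lemma logII0pi2 : IntervalIntegrable Real.log volume 0 (π/2) := by
  refine logII01.trans ?_
  apply intervalIntegrable_log
  intro h
  rw [Set.mem_uIcc] at h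
  have := Real.pi_gt_three
  rcases h with ⟨h1, _⟩ | ⟨_, h2⟩ <;> linarith

lemma lsin_meas : Measurable lsin :=
  Real.measurable_log.comp Real.continuous_sin.measurable.abs

lemma lsinII0pi2 : IntervalIntegrable lsin volume 0 (π/2) := by
  have hpi := Real.pi_gt_three
  rw [intervalIntegrable_iff_integrableOn_Ioc_of_le (by linarith)]
  have hlog : IntegrableOn Real.log (Ioc 0 (π/2)) volume := by
    have := logII0pi2
    rwa [intervalIntegrable_iff_integrableOn_Ioc_of_le (by linarith)] at this
  have hψ : IntegrableOn (fun x => |Real.log x| + Real.log (π/2))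
      (Ioc 0 (π/2)) volume := by
    exact hlog.abs.add (integrableOn_const measure_Ioc_lt_top.ne)
  refine Integrable.mono hψ (lsin_meas.aestronglyMeasurable.restrict) ?_
  filter_upwards [ae_restrict_mem measurableSet_Ioc] with x hx
  obtain ⟨hx0, hx2⟩ := hx
  have hs0 : 0 < Real.sin x := Real.sin_pos_of_pos_of_lt_pi hx0 (by linarith)
  have hub : Real.log (Real.sin x) ≤ Real.log x := by
    apply Real.log_le_log hs0 (Real.sin_le hx0.le)
  have hlb : Real.log x + Real.log (2/π) ≤ Real.log (Real.sin x) := by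
    have h2 : 2/π * x ≤ Real.sin x := Real.mul_le_sin hx0.le hx2
    calc Real.log x + Real.log (2/π) = Real.log (2/π * x) := by
          rw [Real.log_mul (by positivity) (ne_of_gt hx0)]; ring
      _ ≤ Real.log (Real.sin x) := Real.log_le_log (by positivity) h2
  have habs : |Real.sin x| = Real.sin x := abs_of_pos hs0
  have hlp : 0 ≤ Real.log (π/2) := Real.log_nonneg (by linarith [Real.pi_gt_three])
  rw [Real.norm_eq_abs, Real.norm_eq_abs,
    abs_of_nonneg (add_nonneg (abs_nonneg _) hlp)]
  simp only [lsin, habs]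
  have h2pi : Real.log (2/π) = - Real.log (π/2) := by
    rw [← Real.log_inv]; norm_num
  rw [abs_le]
  constructor
  · have : -|Real.log x| ≤ Real.log x := neg_abs_le _
    nlinarith [hlb, h2pi]
  · have : Real.log x ≤ |Real.log x| := le_abs_self _
    linarith

lemma lsin_neg (x : ℝ) : lsin (-x) = lsin x := by
  simp [lsin, Real.sin_neg, abs_neg]

lemma lsin_pi_sub (x : ℝ) : lsin (π - x) = lsin x := by
  simp [lsin, Real.sin_pi_sub]

lemma lsinIIfull : IntervalIntegrable lsin volume (-(π/2)) π := by
  have h1 := lsinII0pi2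
  have h2 : IntervalIntegrable lsin volume (-(π/2)) 0 := by
    have := ((IntervalIntegrable.iff_comp_neg (by finiteness)).mp h1)
    have he : (fun x : ℝ => lsin (-x)) = lsin := funext lsin_neg
    rw [he] at this
    simpa using this.symm
  have h3 : IntervalIntegrable lsin volume (π/2) π := by
    have := h1.comp_sub_left π
    have he : (fun x : ℝ => lsin (π - x)) = lsin := funext lsin_pi_sub
    rw [he] at this
    rw [show π - 0 = π by ring, show π - π/2 = π/2 by ring] at this
    exact this.symm
  exact (h2.trans h1).trans h3

lemma lsinII {a b : ℝ} (ha : a ∈ Icc (-(π/2)) π) (hb : b ∈ Icc (-(π/2)) π) :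
    IntervalIntegrable lsin volume a b := by
  apply lsinIIfull.mono_set
  have : uIcc (-(π/2)) π = Icc (-(π/2)) π := uIcc_of_le (by linarith [Real.pi_pos])
  rw [this]
  exact uIcc_subset_Icc ha hb

-- reflection: ∫_{π/2}^{π} = ∫_0^{π/2}
lemma lsin_reflect : ∫ x in (π/2)..π, lsin x = ∫ x in (0:ℝ)..(π/2), lsin x := by
  have h := intervalIntegral.integral_comp_sub_left (a := 0) (b := π/2) lsin π
  have he : (fun x : ℝ => lsin (π - x)) = lsin := funext lsin_pi_sub
  rw [he] at h
  rw [h]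
  congr 1 <;> ring

lemma mem_helper {t : ℝ} (h1 : -(π/2) ≤ t) (h2 : t ≤ π) : t ∈ Icc (-(π/2)) π :=
  ⟨h1, h2⟩

lemma comp_div_II {f : ℝ → ℝ} {a b : ℝ} (h : IntervalIntegrable f volume a b)
    (c : ℝ) : IntervalIntegrable (fun x => f (x / c)) volume (a * c) (b * c) := by
  have := h.comp_mul_right (c := c⁻¹)
  have he : (fun x => f (x * c⁻¹)) = fun x => f (x / c) := by
    funext x; rw [div_eq_mul_inv]
  rw [he, show a / c⁻¹ = a * c by rw [div_eq_mul_inv, inv_inv],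
    show b / c⁻¹ = b * c by rw [div_eq_mul_inv, inv_inv]] at this
  exact this

-- L = ∫_0^π lsin = -(π log 2)
lemma lsin_integral_pi : ∫ x in (0:ℝ)..π, lsin x = -(π * Real.log 2) := by
  have hpi := Real.pi_pos
  set M := ∫ x in (0:ℝ)..(π/2), lsin x with hM
  have hsplit : ∫ x in (0:ℝ)..π, lsin x = 2 * M := by
    rw [← intervalIntegral.integral_add_adjacent_intervals
      (lsinII (mem_helper (by linarith) (by linarith)) (mem_helper (by linarith) (by linarith)))
      (lsinII (mem_helper (by linarith) (by linarith)) (mem_helper (by linarith) (by linarith)))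
      (a := 0) (b := π/2) (c := π)]
    rw [lsin_reflect]; ring
  -- a.e. identity
  have hcong : ∫ x in (0:ℝ)..π, lsin x
      = ∫ x in (0:ℝ)..π, (Real.log 2 + lsin (x/2) + lsin (x/2 + π/2)) := by
    apply intervalIntegral.integral_congr_ae
    have hane : ∀ᵐ (x : ℝ) ∂volume, x ≠ π := by
      have h0 : volume ({π} : Set ℝ) = 0 := measure_singleton π
      rw [ae_iff]
      convert h0 using 2
      ext x; simp
    filter_upwards [hane] with x hxne hx
    rw [uIoc_of_le (by linarith)] at hx
    obtain ⟨hx0, hx2⟩ := hx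
    have hxpi : x < π := lt_of_le_of_ne hx2 hxne
    have hs1 : 0 < Real.sin (x/2) :=
      Real.sin_pos_of_pos_of_lt_pi (by linarith) (by linarith)
    have hs2 : 0 < Real.sin (x/2 + π/2) :=
      Real.sin_pos_of_pos_of_lt_pi (by linarith) (by linarith)
    have hsin : Real.sin x = 2 * Real.sin (x/2) * Real.sin (x/2 + π/2) := by
      rw [Real.sin_add_pi_div_two]
      have := Real.sin_two_mul (x/2)
      rw [show 2 * (x/2) = x by ring] at this
      linarith
    simp only [lsin]
    rw [hsin, abs_of_pos (by positivity)]
    rw [Real.log_mul (by positivity) (ne_of_gt hs2),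
      Real.log_mul (by norm_num) (ne_of_gt hs1)]
    rw [abs_of_pos hs1, abs_of_pos hs2]
  have hI1 : IntervalIntegrable (fun x => lsin (x/2)) volume 0 π := by
    have := comp_div_II (lsinII (mem_helper (by linarith) (by linarith))
      (mem_helper (by linarith) (by linarith)) (a := 0) (b := π/2)) 2
    rw [show (0:ℝ) * 2 = 0 by ring, show π/2 * 2 = π by ring] at this
    exact this
  have hI2 : IntervalIntegrable (fun x => lsin (x/2 + π/2)) volume 0 π := by
    have h0 := (lsinII (mem_helper (by linarith) (by linarith))
      (mem_helper (by linarith) (by linarith)) (a := π/2) (b := π)).comp_add_right (π/2)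
    rw [show π/2 - π/2 = 0 by ring, show π - π/2 = π/2 by ring] at h0
    have := comp_div_II h0 2
    rw [show (0:ℝ) * 2 = 0 by ring, show π/2 * 2 = π by ring] at this
    exact this
  have hv1 : ∫ x in (0:ℝ)..π, lsin (x/2) = 2 * M := by
    have := intervalIntegral.integral_comp_div (a := 0) (b := π) (c := 2) lsin (by norm_num)
    rw [this, smul_eq_mul, show (0:ℝ)/2 = 0 by norm_num, ← hM]
  have hv2 : ∫ x in (0:ℝ)..π, lsin (x/2 + π/2) = 2 * M := by
    have := intervalIntegral.integral_comp_div_add (a := 0) (b := π) (c := 2)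
      (d := π/2) lsin (by norm_num)
    rw [this, show (0:ℝ)/2 + π/2 = π/2 by ring, show π/2 + π/2 = π by ring,
      smul_eq_mul, lsin_reflect, ← hM]
  have hadd : ∫ x in (0:ℝ)..π, (Real.log 2 + lsin (x/2) + lsin (x/2 + π/2))
      = π * Real.log 2 + 2 * M + 2 * M := by
    rw [intervalIntegral.integral_add ((_root_.intervalIntegrable_const).add hI1) hI2,
      intervalIntegral.integral_add (_root_.intervalIntegrable_const) hI1,
      hv1, hv2, intervalIntegral.integral_const, smul_eq_mul]
    ring
  have : 2 * M = π * Real.log 2 + 2 * M + 2 * M := by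
    conv_lhs => rw [← hsplit]
    rw [hcong, hadd]
  have hMval : M = -(π * Real.log 2) / 2 := by linarith
  rw [hsplit, hMval]; ring

lemma mem_helper' {t : ℝ} (h1 : -(π/2) ≤ t) (h2 : t ≤ π) : t ∈ Icc (-(π/2)) π :=
  ⟨h1, h2⟩

lemma lsin_sum {φ : ℝ} (hφ : φ ∈ Icc (0:ℝ) π) :
    (∫ u in (φ/2)..(π/2 + φ/2), lsin u) + (∫ u in (-(φ/2))..(π/2 - φ/2), lsin u)
      = -(π * Real.log 2) := by
  have hpi := Real.pi_pos
  obtain ⟨hφ0, hφπ⟩ := hφ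
  set M := ∫ x in (0:ℝ)..(π/2), lsin x with hM
  have hMval : 2 * M = -(π * Real.log 2) := by
    rw [← lsin_integral_pi,
      ← intervalIntegral.integral_add_adjacent_intervals (a := 0) (b := π/2) (c := π)
        (lsinII (mem_helper' (by linarith) (by linarith)) (mem_helper' (by linarith) (by linarith)))
        (lsinII (mem_helper' (by linarith) (by linarith)) (mem_helper' (by linarith) (by linarith))),
      lsin_reflect]
    ring
  have II1 : IntervalIntegrable lsin volume (φ/2) (π/2) :=
    lsinII (mem_helper' (by linarith) (by linarith)) (mem_helper' (by linarith) (by linarith))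
  have II2 : IntervalIntegrable lsin volume (π/2) (π/2 + φ/2) :=
    lsinII (mem_helper' (by linarith) (by linarith)) (mem_helper' (by linarith) (by linarith))
  have II3 : IntervalIntegrable lsin volume (-(φ/2)) 0 :=
    lsinII (mem_helper' (by linarith) (by linarith)) (mem_helper' (by linarith) (by linarith))
  have II4 : IntervalIntegrable lsin volume 0 (π/2 - φ/2) :=
    lsinII (mem_helper' (by linarith) (by linarith)) (mem_helper' (by linarith) (by linarith))
  have II5 : IntervalIntegrable lsin volume 0 (φ/2) :=
    lsinII (mem_helper' (by linarith) (by linarith)) (mem_helper' (by linarith) (by linarith))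
  have II6 : IntervalIntegrable lsin volume (π/2 - φ/2) (π/2) :=
    lsinII (mem_helper' (by linarith) (by linarith)) (mem_helper' (by linarith) (by linarith))
  have hS : ∫ u in (φ/2)..(π/2 + φ/2), lsin u
      = (∫ u in (φ/2)..(π/2), lsin u) + ∫ u in (π/2)..(π/2 + φ/2), lsin u :=
    (intervalIntegral.integral_add_adjacent_intervals II1 II2).symm
  have hT : ∫ u in (-(φ/2))..(π/2 - φ/2), lsin u
      = (∫ u in (-(φ/2))..(0:ℝ), lsin u) + ∫ u in (0:ℝ)..(π/2 - φ/2), lsin u :=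
    (intervalIntegral.integral_add_adjacent_intervals II3 II4).symm
  have hrefl : ∫ u in (π/2)..(π/2 + φ/2), lsin u
      = ∫ u in (π/2 - φ/2)..(π/2), lsin u := by
    have h := intervalIntegral.integral_comp_sub_left (a := π/2 - φ/2) (b := π/2) lsin π
    have he : (fun x : ℝ => lsin (π - x)) = lsin := funext lsin_pi_sub
    rw [he, show π - π/2 = π/2 by ring, show π - (π/2 - φ/2) = π/2 + φ/2 by ring] at h
    exact h.symm
  have hneg : ∫ u in (-(φ/2))..(0:ℝ), lsin u = ∫ u in (0:ℝ)..(φ/2), lsin u := by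
    have h := intervalIntegral.integral_comp_neg (a := 0) (b := φ/2) lsin
    have he : (fun x : ℝ => lsin (-x)) = lsin := funext lsin_neg
    rw [he, neg_zero] at h
    exact h.symm
  have hM1 : M = (∫ u in (0:ℝ)..(φ/2), lsin u) + ∫ u in (φ/2)..(π/2), lsin u :=
    (intervalIntegral.integral_add_adjacent_intervals II5 II1).symm
  have hM2 : M = (∫ u in (0:ℝ)..(π/2 - φ/2), lsin u) + ∫ u in (π/2 - φ/2)..(π/2), lsin u :=
    (intervalIntegral.integral_add_adjacent_intervals II4 II6).symm
  rw [hS, hT, hrefl, hneg]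
  linarith [hMval, hM1, hM2]

lemma mem_helper'' {t : ℝ} (h1 : -(π/2) ≤ t) (h2 : t ≤ π) : t ∈ Icc (-(π/2)) π :=
  ⟨h1, h2⟩

lemma key_integral {b φ : ℝ} (hb : 0 < b) (hφ : φ ∈ Icc (0:ℝ) π) :
    ∫ θ in (0:ℝ)..π, Real.log |b * Real.cos θ - b * Real.cos φ|
      = π * Real.log (b/2) := by
  have hpi := Real.pi_pos
  obtain ⟨hφ0, hφπ⟩ := hφ
  have hcong : ∫ θ in (0:ℝ)..π, Real.log |b * Real.cos θ - b * Real.cos φ|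
      = ∫ θ in (0:ℝ)..π,
          (Real.log b + Real.log 2 + lsin (θ/2 + φ/2) + lsin (θ/2 - φ/2)) := by
    apply intervalIntegral.integral_congr_ae
    have hane : ∀ᵐ (x : ℝ) ∂volume, x ≠ φ ∧ x ≠ 2*π - φ := by
      have h0 : volume ({φ, 2*π - φ} : Set ℝ) = 0 := by
        apply Set.Finite.measure_zero
        exact (Set.finite_singleton _).insert _
      rw [ae_iff]
      convert h0 using 2
      ext x
      simp only [Set.mem_setOf_eq, Set.mem_insert_iff, Set.mem_singleton_iff]
      tauto
    filter_upwards [hane] with θ hθne hθmem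
    obtain ⟨hne1, hne2⟩ := hθne
    rw [uIoc_of_le (by linarith)] at hθmem
    obtain ⟨hθ0, hθπ⟩ := hθmem
    have hs1 : 0 < Real.sin (θ/2 + φ/2) := by
      apply Real.sin_pos_of_pos_of_lt_pi (by linarith)
      have : θ + φ ≠ 2*π := fun h => hne2 (by linarith)
      have : θ + φ < 2*π := lt_of_le_of_ne (by linarith) this
      linarith
    have hs2 : Real.sin (θ/2 - φ/2) ≠ 0 := by
      have hts : θ/2 - φ/2 ≠ 0 := by
        intro h
        exact hne1 (by linarith)
      rcases lt_or_gt_of_ne hts with h | h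
      · have hpos := Real.sin_pos_of_pos_of_lt_pi (x := -(θ/2 - φ/2))
          (by linarith) (by linarith)
        rw [Real.sin_neg] at hpos
        exact ne_of_lt (by linarith)
      · exact ne_of_gt (Real.sin_pos_of_pos_of_lt_pi h (by linarith))
    have hfact : b * Real.cos θ - b * Real.cos φ
        = b * (-2 * Real.sin (θ/2 + φ/2) * Real.sin (θ/2 - φ/2)) := by
      rw [show b * Real.cos θ - b * Real.cos φ = b * (Real.cos θ - Real.cos φ) by ring,
        Real.cos_sub_cos]
      ring_nf
    rw [hfact]
    rw [abs_mul, abs_mul, abs_mul]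
    rw [show |(-2 : ℝ)| = 2 by norm_num, abs_of_pos hb]
    rw [Real.log_mul (by positivity) (by positivity), Real.log_mul (by positivity)
      (abs_ne_zero.mpr hs2), Real.log_mul (by norm_num) (abs_ne_zero.mpr (ne_of_gt hs1))]
    simp only [lsin]
    ring
  rw [hcong]
  -- integrability of the pieces
  have hIa : IntervalIntegrable (fun θ => lsin (θ/2 + φ/2)) volume 0 π := by
    have h0 := (lsinII (mem_helper'' (by linarith) (by linarith))
      (mem_helper'' (by linarith) (by linarith)) (a := φ/2) (b := π/2 + φ/2)).comp_add_right (φ/2)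
    rw [show φ/2 - φ/2 = 0 by ring, show π/2 + φ/2 - φ/2 = π/2 by ring] at h0
    have h1 := comp_div_II h0 2
    rw [show (0:ℝ) * 2 = 0 by ring, show π/2 * 2 = π by ring] at h1
    exact h1
  have hIb : IntervalIntegrable (fun θ => lsin (θ/2 - φ/2)) volume 0 π := by
    have h0 := (lsinII (mem_helper'' (by linarith) (by linarith))
      (mem_helper'' (by linarith) (by linarith))
      (a := -(φ/2)) (b := π/2 - φ/2)).comp_sub_right (φ/2)
    rw [show -(φ/2) + φ/2 = 0 by ring, show π/2 - φ/2 + φ/2 = π/2 by ring] at h0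
    have h1 := comp_div_II h0 2
    rw [show (0:ℝ) * 2 = 0 by ring, show π/2 * 2 = π by ring] at h1
    exact h1
  have hva : ∫ θ in (0:ℝ)..π, lsin (θ/2 + φ/2)
      = 2 * ∫ u in (φ/2)..(π/2 + φ/2), lsin u := by
    have := intervalIntegral.integral_comp_div_add (a := 0) (b := π) (c := 2)
      (d := φ/2) lsin (by norm_num)
    rw [this, smul_eq_mul, show (0:ℝ)/2 + φ/2 = φ/2 by ring,
      show π/2 + φ/2 = π/2 + φ/2 from rfl]
  have hvb : ∫ θ in (0:ℝ)..π, lsin (θ/2 - φ/2)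
      = 2 * ∫ u in (-(φ/2))..(π/2 - φ/2), lsin u := by
    have := intervalIntegral.integral_comp_div_sub (a := 0) (b := π) (c := 2)
      (d := φ/2) lsin (by norm_num)
    rw [this, smul_eq_mul, show (0:ℝ)/2 - φ/2 = -(φ/2) by ring]
  rw [intervalIntegral.integral_add (((_root_.intervalIntegrable_const).add hIa)) hIb,
    intervalIntegral.integral_add (_root_.intervalIntegrable_const) hIa,
    hva, hvb, intervalIntegral.integral_const, smul_eq_mul]
  have hsum := lsin_sum ⟨hφ0, hφπ⟩
  have hlog : Real.log (b/2) = Real.log b - Real.log 2 :=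
    Real.log_div (ne_of_gt hb) (by norm_num)
  rw [hlog]
  nlinarith [hsum]

/-- For `b > 0` and `y ∈ [-b,b]`,
`∫_{-b}^{b} ln|x-y| / √(b²-x²) dx = π ln(b/2)`, independent of `y`. -/
theorem stmt_11 (b : ℝ) (hb : 0 < b) :
    ∀ y ∈ Set.Icc (-b) b,
      ∫ x in (-b)..b, Real.log |x - y| / Real.sqrt (b ^ 2 - x ^ 2)
        = Real.pi * Real.log (b / 2) := by
  intro y hy
  obtain ⟨hy1, hy2⟩ := hy
  have hpi := Real.pi_pos
  set g : ℝ → ℝ := fun x => Real.log |x - y| / Real.sqrt (b ^ 2 - x ^ 2) with hg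
  -- substitution x = b cos θ
  have himg : (fun θ : ℝ => b * Real.cos θ) '' Ioo 0 π = Ioo (-b) b := by
    ext x
    constructor
    · rintro ⟨θ, ⟨h0, hπ⟩, rfl⟩
      have hlt1 : Real.cos θ < 1 := by
        have := Real.strictAntiOn_cos (left_mem_Icc.mpr hpi.le)
          ⟨h0.le, hπ.le⟩ h0
        rwa [Real.cos_zero] at this
      have hgt : -1 < Real.cos θ := by
        have := Real.strictAntiOn_cos ⟨h0.le, hπ.le⟩
          (right_mem_Icc.mpr hpi.le) hπ
        rwa [Real.cos_pi] at this
      constructor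
      · show -b < b * Real.cos θ
        nlinarith
      · show b * Real.cos θ < b
        nlinarith
    · rintro ⟨hx1, hx2⟩
      refine ⟨Real.arccos (x/b), ⟨?_, ?_⟩, ?_⟩
      · exact Real.arccos_pos.mpr ((div_lt_one hb).mpr hx2)
      · refine lt_of_le_of_ne (Real.arccos_le_pi _) ?_
        rw [Ne, Real.arccos_eq_pi, not_le]
        rw [lt_div_iff₀ hb]
        linarith
      · show b * Real.cos (Real.arccos (x/b)) = x
        rw [Real.cos_arccos (by rw [le_div_iff₀ hb]; linarith)
          (by rw [div_le_one hb]; linarith)]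
        field_simp
  have hderiv : ∀ θ ∈ Ioo (0:ℝ) π,
      HasDerivWithinAt (fun θ : ℝ => b * Real.cos θ) (b * -Real.sin θ) (Ioo 0 π) θ :=
    fun θ _ => ((Real.hasDerivAt_cos θ).const_mul b).hasDerivWithinAt
  have hinj : InjOn (fun θ : ℝ => b * Real.cos θ) (Ioo 0 π) := by
    intro θ₁ h₁ θ₂ h₂ h
    have : Real.cos θ₁ = Real.cos θ₂ := mul_left_cancel₀ (ne_of_gt hb) h
    exact Real.injOn_cos (Ioo_subset_Icc_self h₁) (Ioo_subset_Icc_self h₂) this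
  have hsub := MeasureTheory.integral_image_eq_integral_abs_deriv_smul
    measurableSet_Ioo hderiv hinj g
  rw [himg] at hsub
  -- simplify RHS of substitution
  have hRHS : ∫ θ in Ioo (0:ℝ) π, |b * -Real.sin θ| • g (b * Real.cos θ)
      = ∫ θ in Ioo (0:ℝ) π, Real.log |b * Real.cos θ - y| := by
    apply MeasureTheory.setIntegral_congr_fun measurableSet_Ioo
    intro θ ⟨h0, hπ⟩
    have hs : 0 < Real.sin θ := Real.sin_pos_of_pos_of_lt_pi h0 hπ
    have habs : |b * -Real.sin θ| = b * Real.sin θ := by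
      rw [abs_of_nonpos (by nlinarith)]
      ring
    have hsqrt : Real.sqrt (b ^ 2 - (b * Real.cos θ) ^ 2) = b * Real.sin θ := by
      have h1 : b ^ 2 - (b * Real.cos θ) ^ 2 = (b * Real.sin θ) ^ 2 := by
        have := Real.sin_sq_add_cos_sq θ
        nlinarith
      rw [h1, Real.sqrt_sq (by positivity)]
    show |b * -Real.sin θ| • g (b * Real.cos θ) = Real.log |b * Real.cos θ - y|
    rw [habs, hg]
    simp only [smul_eq_mul]
    rw [hsqrt]
    rw [mul_div_assoc']
    rw [mul_comm, mul_div_assoc]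
    rw [div_self (by positivity), mul_one]
  rw [hRHS] at hsub
  -- convert to interval integrals
  have hLHS : ∫ x in (-b)..b, g x = ∫ x in Ioo (-b) b, g x := by
    rw [intervalIntegral.integral_of_le (by linarith), integral_Ioc_eq_integral_Ioo]
  have hR2 : ∫ θ in (0:ℝ)..π, Real.log |b * Real.cos θ - y|
      = ∫ θ in Ioo (0:ℝ) π, Real.log |b * Real.cos θ - y| := by
    rw [intervalIntegral.integral_of_le hpi.le, integral_Ioc_eq_integral_Ioo]
  -- combine with key_integral at φ = arccos (y/b)
  have hmem : y / b ∈ Icc (-1:ℝ) 1 := by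
    constructor
    · rw [le_div_iff₀ hb]; linarith
    · rw [div_le_one hb]; linarith
  have hφmem : Real.arccos (y/b) ∈ Icc (0:ℝ) π :=
    ⟨Real.arccos_nonneg _, Real.arccos_le_pi _⟩
  have hcosφ : b * Real.cos (Real.arccos (y/b)) = y := by
    rw [Real.cos_arccos hmem.1 hmem.2]
    field_simp
  have hkey := key_integral hb hφmem
  rw [hcosφ] at hkey
  calc ∫ x in (-b)..b, g x = ∫ x in Ioo (-b) b, g x := hLHS
    _ = ∫ θ in Ioo (0:ℝ) π, Real.log |b * Real.cos θ - y| := hsub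
    _ = ∫ θ in (0:ℝ)..π, Real.log |b * Real.cos θ - y| := hR2.symm
    _ = π * Real.log (b/2) := hkey
end

section
/- For $0<b<1$, $\alpha>0$, $t>0$ and $\mathrm{v}(x)=\frac{t}{1-x^2}-\alpha\ln(1-x^2)$, one has $\int_{-b}^{b}\frac{\mathrm{v}(x)}{\sqrt{b^2-x^2}}\,dx = \frac{\pi t}{\sqrt{1-b^2}}+2\pi\alpha\ln\Big(\frac{2}{1+\sqrt{1-b^2}}\Big)$. -/
open Real MeasureTheory intervalIntegral Complex Metric

lemma repos {r : ℝ} (hr0 : 0 ≤ r) (hr : r < 1) {z : ℂ} (hz : z ∈ closedBall (0:ℂ) 1) :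
    0 < (1 - (r:ℂ) * z).re := by
  have hzre : |z.re| ≤ 1 := (Complex.abs_re_le_norm z).trans (by simpa [Complex.dist_eq] using hz)
  simp only [Complex.sub_re, Complex.one_re, Complex.mul_re, Complex.ofReal_re,
    Complex.ofReal_im]
  nlinarith [abs_le.1 hzre]

lemma mv (r : ℝ) (hr0 : 0 ≤ r) (hr : r < 1) :
    (∫ θ in (0:ℝ)..2*π, Complex.log (1 - r * Complex.exp (θ * Complex.I))) = 0 := by
  set f : ℂ → ℂ := fun z => Complex.log (1 - r * z) with hf
  have hdiff : ∀ z ∈ closedBall (0:ℂ) 1, DifferentiableAt ℂ f z := by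
    intro z hz
    have h1 : DifferentiableAt ℂ Complex.log (1 - r * z) :=
      Complex.differentiableAt_log (Complex.mem_slitPlane_iff.2 (Or.inl (repos hr0 hr hz)))
    exact DifferentiableAt.comp (g := Complex.log) (f := fun w : ℂ => 1 - (r:ℂ) * w) z h1 (by fun_prop)
  have hd : DiffContOnCl ℂ f (ball (0:ℂ) 1) := by
    refine ⟨fun z hz => (hdiff z (ball_subset_closedBall hz)).differentiableWithinAt, ?_⟩
    rw [closure_ball (0:ℂ) one_ne_zero]
    exact fun z hz => (hdiff z hz).continuousAt.continuousWithinAt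
  have key := hd.circleIntegral_sub_inv_smul (w := 0) (by simp)
  have hf0 : f 0 = 0 := by simp [hf]
  rw [hf0, smul_zero] at key
  rw [circleIntegral] at key
  simp only [deriv_circleMap, circleMap, Complex.ofReal_one, zero_add, one_mul, sub_zero,
    smul_eq_mul] at key
  have : ∀ θ : ℝ, Complex.exp (θ * Complex.I) * Complex.I * ((Complex.exp (θ * Complex.I))⁻¹ * f (Complex.exp (θ * Complex.I))) = Complex.I * f (Complex.exp (θ * Complex.I)) := by
    intro θ
    have := Complex.exp_ne_zero (θ * Complex.I)
    field_simp
  rw [intervalIntegral.integral_congr (fun θ _ => this θ)] at key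
  rw [intervalIntegral.integral_const_mul] at key
  simpa [Complex.I_ne_zero, hf] using key

lemma mv_real (r : ℝ) (hr0 : 0 ≤ r) (hr : r < 1) :
    (∫ θ in (0:ℝ)..2*π, Real.log (1 + r^2 - 2*r*Real.cos θ)) = 0 := by
  have hmem : ∀ θ : ℝ, Complex.exp (θ * Complex.I) ∈ closedBall (0:ℂ) 1 := by
    intro θ
    simp [Complex.dist_eq, Complex.norm_exp]
  have hrepos : ∀ θ : ℝ, 0 < (1 - (r:ℂ) * Complex.exp (θ * Complex.I)).re :=
    fun θ => repos hr0 hr (hmem θ)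
  have habs : ∀ θ : ℝ, ‖1 - (r:ℂ) * Complex.exp (θ * Complex.I)‖^2
      = 1 + r^2 - 2*r*Real.cos θ := by
    intro θ
    rw [Complex.sq_norm, Complex.normSq_apply]
    simp only [Complex.sub_re, Complex.sub_im, Complex.one_re, Complex.one_im, Complex.mul_re,
      Complex.mul_im, Complex.ofReal_re, Complex.ofReal_im]
    rw [Complex.exp_ofReal_mul_I_re, Complex.exp_ofReal_mul_I_im]
    nlinarith [Real.sin_sq_add_cos_sq θ]
  have habspos : ∀ θ : ℝ, 0 < ‖1 - (r:ℂ) * Complex.exp (θ * Complex.I)‖ := by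
    intro θ
    rw [norm_pos_iff]
    intro h0
    have := hrepos θ
    rw [h0] at this
    simp at this
  have hcont : Continuous fun θ : ℝ => Complex.log (1 - (r:ℂ) * Complex.exp (θ * Complex.I)) :=
    Continuous.clog (by fun_prop) (fun θ => Complex.mem_slitPlane_iff.2 (Or.inl (hrepos θ)))
  have hint : IntervalIntegrable (fun θ : ℝ => Complex.log (1 - (r:ℂ) * Complex.exp (θ * Complex.I))) volume 0 (2*π) := hcont.intervalIntegrable _ _
  have hre := Complex.reCLM.intervalIntegral_comp_comm hint
  rw [mv r hr0 hr] at hre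
  simp only [Complex.reCLM_apply, map_zero] at hre
  have heq : ∀ θ : ℝ, Real.log (1 + r^2 - 2*r*Real.cos θ)
      = 2 * (Complex.log (1 - (r:ℂ) * Complex.exp (θ * Complex.I))).re := by
    intro θ
    rw [Complex.log_re, ← habs θ, Real.log_pow]
    push_cast; ring
  rw [intervalIntegral.integral_congr (fun θ _ => heq θ), intervalIntegral.integral_const_mul, hre, mul_zero]

lemma Jzero (r : ℝ) (hr0 : 0 ≤ r) (hr : r < 1)
    (hmv : (∫ θ in (0:ℝ)..2*π, Real.log (1 + r^2 - 2*r*Real.cos θ)) = 0) :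
    (∫ θ in (-(π/2))..(π/2), Real.log (1 + r^2 + 2*r*Real.cos (2*θ))) = 0 := by
  have h2 : (∫ θ in (-(π/2))..(π/2), Real.log (1 + r^2 + 2*r*Real.cos (2*θ)))
      = (2:ℝ)⁻¹ • ∫ u in (2*(-(π/2)))..(2*(π/2)), Real.log (1 + r^2 + 2*r*Real.cos u) :=
    intervalIntegral.integral_comp_mul_left (fun u => Real.log (1 + r^2 + 2*r*Real.cos u)) two_ne_zero
  have h3 : (∫ u in ((0:ℝ))..(2*π), Real.log (1 + r^2 + 2*r*Real.cos (u - π)))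
      = ∫ u in (0 - π)..(2*π - π), Real.log (1 + r^2 + 2*r*Real.cos u) :=
    intervalIntegral.integral_comp_sub_right (a := 0) (b := 2*π)
      (fun u => Real.log (1 + r^2 + 2*r*Real.cos u)) π
  have h4 : ∀ u : ℝ, Real.log (1 + r^2 + 2*r*Real.cos (u - π)) = Real.log (1 + r^2 - 2*r*Real.cos u) := by
    intro u; rw [Real.cos_sub_pi]; ring_nf
  rw [intervalIntegral.integral_congr (fun u _ => h4 u), hmv] at h3
  rw [h2]
  have : (2*(-(π/2)) : ℝ) = 0 - π := by ring
  rw [this]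
  have : (2*(π/2) : ℝ) = 2*π - π := by ring
  rw [this, ← h3]
  simp

-- Poisson kernel integral via FTC
lemma Poisson (r : ℝ) (hr0 : 0 ≤ r) (hr : r < 1) :
    (∫ θ in (-(π/2))..(π/2), (1-r^2)/(1+r^2+2*r*Real.cos (2*θ))) = π := by
  set F : ℝ → ℝ := fun θ => θ - Real.arctan (r * Real.sin (2*θ) / (1 + r * Real.cos (2*θ))) with hF
  have hden : ∀ θ : ℝ, 0 < 1 + r * Real.cos (2*θ) := by
    intro θ
    nlinarith [Real.neg_one_le_cos (2*θ), Real.cos_le_one (2*θ)]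
  have hden2 : ∀ θ : ℝ, 0 < 1 + r^2 + 2*r*Real.cos (2*θ) := by
    intro θ
    nlinarith [Real.neg_one_le_cos (2*θ), Real.cos_le_one (2*θ)]
  have hderiv : ∀ θ ∈ Set.uIcc (-(π/2)) (π/2), HasDerivAt F ((1-r^2)/(1+r^2+2*r*Real.cos (2*θ))) θ := by
    intro θ _
    have h1 : HasDerivAt (fun θ : ℝ => 2*θ) 2 θ := by
      simpa using (hasDerivAt_id θ).const_mul 2
    have hs : HasDerivAt (fun θ : ℝ => Real.sin (2*θ)) (2 * Real.cos (2*θ)) θ := by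
      simpa [Function.comp_def, mul_comm] using (Real.hasDerivAt_sin (2*θ)).comp θ h1
    have hc : HasDerivAt (fun θ : ℝ => Real.cos (2*θ)) (-(2 * Real.sin (2*θ))) θ := by
      simpa [Function.comp_def, mul_comm] using (Real.hasDerivAt_cos (2*θ)).comp θ h1
    have hnum : HasDerivAt (fun θ : ℝ => r * Real.sin (2*θ)) (r * (2 * Real.cos (2*θ))) θ := hs.const_mul r
    have hdend : HasDerivAt (fun θ : ℝ => 1 + r * Real.cos (2*θ)) (r * -(2 * Real.sin (2*θ))) θ :=
      (hc.const_mul r).const_add 1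
    have hq : HasDerivAt (fun θ : ℝ => r * Real.sin (2*θ) / (1 + r * Real.cos (2*θ)))
        ((r * (2 * Real.cos (2*θ)) * (1 + r * Real.cos (2*θ)) - r * Real.sin (2*θ) * (r * -(2 * Real.sin (2*θ)))) / (1 + r * Real.cos (2*θ))^2) θ :=
      hnum.div hdend (hden θ).ne'
    have hat : HasDerivAt (fun θ : ℝ => Real.arctan (r * Real.sin (2*θ) / (1 + r * Real.cos (2*θ))))
        ((1 + (r * Real.sin (2*θ) / (1 + r * Real.cos (2*θ)))^2)⁻¹ *
          ((r * (2 * Real.cos (2*θ)) * (1 + r * Real.cos (2*θ)) - r * Real.sin (2*θ) * (r * -(2 * Real.sin (2*θ)))) / (1 + r * Real.cos (2*θ))^2)) θ := by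
      simpa [Function.comp_def, one_div] using (Real.hasDerivAt_arctan _).comp θ hq
    have : HasDerivAt F (1 - ((1 + (r * Real.sin (2*θ) / (1 + r * Real.cos (2*θ)))^2)⁻¹ *
          ((r * (2 * Real.cos (2*θ)) * (1 + r * Real.cos (2*θ)) - r * Real.sin (2*θ) * (r * -(2 * Real.sin (2*θ)))) / (1 + r * Real.cos (2*θ))^2))) θ :=
      (hasDerivAt_id θ).sub hat
    convert this using 1
    have hd := (hden θ).ne'
    have hd2 := (hden2 θ).ne'
    have hsc := Real.sin_sq_add_cos_sq (2*θ)
    have hs2 : Real.sin (θ*2)^2 = 1 - Real.cos (θ*2)^2 := by nlinarith [Real.sin_sq_add_cos_sq (θ*2)]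
    field_simp
    ring_nf
    rw [hs2]
    have hd3 : 1 + r * Real.cos (θ * 2) * 2 + r ^ 2 ≠ 0 := by
      have := hden2 θ; rw [mul_comm 2 θ] at this; linarith
    linear_combination (1 - r^2) * mul_inv_cancel₀ hd3
  have hcont : ContinuousOn (fun θ : ℝ => (1-r^2)/(1+r^2+2*r*Real.cos (2*θ))) (Set.uIcc (-(π/2)) (π/2)) := by
    apply ContinuousOn.div (by fun_prop) (by fun_prop)
    exact fun θ _ => (hden2 θ).ne'
  have := intervalIntegral.integral_eq_sub_of_hasDerivAt hderiv (hcont.intervalIntegrable)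
  rw [this]
  simp only [hF]
  norm_num [show (2*(π/2):ℝ) = π by ring, Real.sin_pi, Real.cos_pi]

lemma img (b : ℝ) (hb : 0 < b) (hb1 : b < 1) :
    (fun θ : ℝ => b * Real.sin θ) '' Set.Ioo (-(π/2)) (π/2) = Set.Ioo (-b) b := by
  ext y
  constructor
  · rintro ⟨θ, hθ, rfl⟩
    have hpi := Real.pi_pos
    have h1 : Real.sin θ < 1 := by
      have := Real.strictMonoOn_sin (a := θ) (b := π/2)
        ⟨le_of_lt hθ.1, le_of_lt hθ.2⟩ ⟨by linarith, le_refl _⟩ hθ.2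
      simpa using this
    have h2 : -1 < Real.sin θ := by
      have := Real.strictMonoOn_sin (a := -(π/2)) (b := θ)
        ⟨le_refl _, by linarith⟩ ⟨le_of_lt hθ.1, le_of_lt hθ.2⟩ hθ.1
      simpa using this
    simp only [Set.mem_Ioo]
    constructor
    · nlinarith [mul_lt_mul_of_pos_left h2 hb]
    · nlinarith [mul_lt_mul_of_pos_left h1 hb]
  · rintro ⟨h1, h2⟩
    refine ⟨Real.arcsin (y / b), ⟨?_, ?_⟩, ?_⟩
    · rw [show (-(π/2) : ℝ) = -(π/2) from rfl]
      exact Real.neg_pi_div_two_lt_arcsin.2 (by rw [lt_div_iff₀ hb]; nlinarith)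
    · exact Real.arcsin_lt_pi_div_two.2 (by rw [div_lt_iff₀ hb]; nlinarith)
    · show b * Real.sin (Real.arcsin (y/b)) = y
      rw [Real.sin_arcsin (by rw [le_div_iff₀ hb]; nlinarith) (by rw [div_le_iff₀ hb]; nlinarith)]
      field_simp

open Set in
set_option maxHeartbeats 1000000 in
/-- For `0 < b < 1`, `α, t > 0` and `v(x) = t/(1-x²) - α ln(1-x²)`,
`∫_{-b}^b v(x)/√(b²-x²) dx = πt/√(1-b²) + 2πα ln(2/(1+√(1-b²)))`. -/
theorem stmt_12 (b α t : ℝ) (hb : 0 < b) (hb1 : b < 1) (hα : 0 < α) (ht : 0 < t)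
    (v : ℝ → ℝ) (hv : ∀ x : ℝ, v x = t / (1 - x ^ 2) - α * Real.log (1 - x ^ 2)) :
    ∫ x in (-b)..b, v x / Real.sqrt (b ^ 2 - x ^ 2)
      = Real.pi * t / Real.sqrt (1 - b ^ 2)
        + 2 * Real.pi * α * Real.log (2 / (1 + Real.sqrt (1 - b ^ 2))) := by
  have hpi := Real.pi_pos
  set c : ℝ := Real.sqrt (1 - b^2) with hcdef
  have hb2 : (0:ℝ) < 1 - b^2 := by nlinarith
  have hc : 0 < c := Real.sqrt_pos.2 hb2
  have hc2 : c^2 = 1 - b^2 := Real.sq_sqrt hb2.le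
  have hc1 : c < 1 := by nlinarith
  set r : ℝ := (1 - c)/(1 + c) with hrdef
  have hc1' : (0:ℝ) < 1 + c := by linarith
  have hr0 : 0 ≤ r := div_nonneg (by linarith) hc1'.le
  have hr1 : r < 1 := by rw [hrdef, div_lt_one hc1']; linarith
  -- key algebraic identity
  have hkey : ∀ θ : ℝ, 1 - b^2 * Real.sin θ^2
      = ((1+c)^2/4) * (1 + r^2 + 2*r*Real.cos (2*θ)) := by
    intro θ
    have hcos : Real.cos (2*θ) = 1 - 2*Real.sin θ^2 := by
      rw [Real.cos_two_mul]
      nlinarith [Real.sin_sq_add_cos_sq θ]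
    rw [hcos, hrdef, show b^2 = 1 - c^2 by linarith]
    field_simp
    ring
  have hDpos : ∀ θ : ℝ, 0 < 1 + r^2 + 2*r*Real.cos (2*θ) := by
    intro θ
    nlinarith [Real.neg_one_le_cos (2*θ), Real.cos_le_one (2*θ)]
  have hpos : ∀ θ : ℝ, 0 < 1 - b^2 * Real.sin θ^2 := by
    intro θ
    rw [hkey θ]
    exact mul_pos (by positivity) (hDpos θ)
  -- change of variables
  set g : ℝ → ℝ := fun x => v x / Real.sqrt (b ^ 2 - x ^ 2) with hgdef
  have hderiv : ∀ θ ∈ Ioo (-(π/2)) (π/2), HasDerivWithinAt (fun θ : ℝ => b * Real.sin θ)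
      (b * Real.cos θ) (Ioo (-(π/2)) (π/2)) θ := by
    intro θ _
    exact ((Real.hasDerivAt_sin θ).const_mul b).hasDerivWithinAt
  have hinj : InjOn (fun θ : ℝ => b * Real.sin θ) (Ioo (-(π/2)) (π/2)) := by
    intro x hx y hy hxy
    have hsub : Ioo (-(π/2)) (π/2) ⊆ Icc (-(π/2)) (π/2) := Ioo_subset_Icc_self
    exact Real.strictMonoOn_sin.injOn (hsub hx) (hsub hy)
      (mul_left_cancel₀ hb.ne' hxy)
  have hcv := integral_image_eq_integral_abs_deriv_smul measurableSet_Ioo hderiv hinj g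
  rw [img b hb hb1] at hcv
  -- lhs as set integral
  have hlhs : (∫ x in (-b)..b, g x) = ∫ x in Ioo (-b) b, g x := by
    rw [intervalIntegral.integral_of_le (by linarith), MeasureTheory.integral_Ioc_eq_integral_Ioo]
  -- the θ integrand
  set h : ℝ → ℝ := fun θ => t / (1 - b^2 * Real.sin θ^2)
      - α * Real.log (1 - b^2 * Real.sin θ^2) with hhdef
  have hcongr : ∫ θ in Ioo (-(π/2)) (π/2), |b * Real.cos θ| • g (b * Real.sin θ)
      = ∫ θ in Ioo (-(π/2)) (π/2), h θ := by
    apply MeasureTheory.setIntegral_congr_fun measurableSet_Ioo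
    intro θ hθ
    have hcos : 0 < Real.cos θ := Real.cos_pos_of_mem_Ioo hθ
    have hbc : 0 < b * Real.cos θ := mul_pos hb hcos
    have hsq : b^2 - (b * Real.sin θ)^2 = (b * Real.cos θ)^2 := by
      nlinarith [Real.sin_sq_add_cos_sq θ]
    simp only [hgdef, smul_eq_mul]
    rw [hv, hsq, Real.sqrt_sq hbc.le, abs_of_pos hbc]
    have h1 : 1 - (b * Real.sin θ)^2 = 1 - b^2 * Real.sin θ^2 := by ring
    rw [h1, hhdef]
    field_simp
  -- main θ integral computation
  have hcont1 : Continuous fun θ : ℝ => t / (1 - b^2 * Real.sin θ^2) :=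
    continuous_const.div (by fun_prop) (fun θ => (hpos θ).ne')
  have hcont2 : Continuous fun θ : ℝ => Real.log (1 - b^2 * Real.sin θ^2) :=
    Continuous.log (by fun_prop) (fun θ => (hpos θ).ne')
  have hcont3 : Continuous fun θ : ℝ => Real.log (1 + r^2 + 2*r*Real.cos (2*θ)) :=
    Continuous.log (by fun_prop) (fun θ => (hDpos θ).ne')
  -- first piece
  have hI1 : (∫ θ in (-(π/2))..(π/2), t / (1 - b^2 * Real.sin θ^2)) = π * t / c := by
    have heq : ∀ θ : ℝ, t / (1 - b^2 * Real.sin θ^2)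
        = (t/c) * ((1-r^2)/(1+r^2+2*r*Real.cos (2*θ))) := by
      intro θ
      have hD := (hDpos θ).ne'
      have hr2 : 1 - r^2 = 4*c/(1+c)^2 := by rw [hrdef]; field_simp; ring
      rw [hkey θ, hr2]
      field_simp
    rw [intervalIntegral.integral_congr (fun θ _ => heq θ),
      intervalIntegral.integral_const_mul, Poisson r hr0 hr1]
    ring
  -- second piece
  have hI2 : (∫ θ in (-(π/2))..(π/2), Real.log (1 - b^2 * Real.sin θ^2))
      = π * Real.log ((1+c)^2/4) := by
    have heq : ∀ θ : ℝ, Real.log (1 - b^2 * Real.sin θ^2)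
        = Real.log ((1+c)^2/4) + Real.log (1 + r^2 + 2*r*Real.cos (2*θ)) := by
      intro θ
      rw [hkey θ, Real.log_mul (by positivity) (hDpos θ).ne']
    rw [intervalIntegral.integral_congr (fun θ _ => heq θ),
      intervalIntegral.integral_add (intervalIntegrable_const) (hcont3.intervalIntegrable _ _),
      Jzero r hr0 hr1 (mv_real r hr0 hr1), add_zero, intervalIntegral.integral_const,
      smul_eq_mul]
    ring
  -- total θ integral
  have hmain : (∫ θ in (-(π/2))..(π/2), h θ)
      = π * t / c + 2 * π * α * Real.log (2 / (1 + c)) := by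
    have hsplit : (∫ θ in (-(π/2))..(π/2), h θ)
        = (∫ θ in (-(π/2))..(π/2), t / (1 - b^2 * Real.sin θ^2))
          - α * ∫ θ in (-(π/2))..(π/2), Real.log (1 - b^2 * Real.sin θ^2) := by
      rw [hhdef, ← intervalIntegral.integral_const_mul,
        ← intervalIntegral.integral_sub (hcont1.intervalIntegrable _ _)
          (Continuous.intervalIntegrable (u := fun θ => α * Real.log (1 - b^2 * Real.sin θ^2)) (continuous_const.mul hcont2) _ _)]
    rw [hsplit, hI1, hI2]
    have hl1 : Real.log ((1+c)^2/4) = 2*Real.log (1+c) - 2*Real.log 2 := by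
      rw [Real.log_div (by positivity) (by norm_num), Real.log_pow,
        show (4:ℝ) = 2^2 by norm_num, Real.log_pow]
      push_cast
      ring
    have hl2 : Real.log (2/(1+c)) = Real.log 2 - Real.log (1+c) :=
      Real.log_div two_ne_zero hc1'.ne'
    rw [hl1, hl2]
    ring
  calc (∫ x in (-b)..b, g x) = ∫ x in Ioo (-b) b, g x := hlhs
    _ = ∫ θ in Ioo (-(π/2)) (π/2), |b * Real.cos θ| • g (b * Real.sin θ) := hcv
    _ = ∫ θ in Ioo (-(π/2)) (π/2), h θ := hcongr
    _ = ∫ θ in (-(π/2))..(π/2), h θ := by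
        rw [intervalIntegral.integral_of_le (by linarith),
          MeasureTheory.integral_Ioc_eq_integral_Ioo]
    _ = π * t / c + 2 * π * α * Real.log (2 / (1 + c)) := hmain
end
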